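/- In k[[z]], the Rothe/Hardy–Wright identity: for ω ∈ k with ω^j ≠ 1 for all relevant j, 1/((1-z)(1-zω)···(1-zω^{s})) = ∑_{k≥0} z^k · ∏_{j=1}^{k} (1-ω^{s+j})/(1-ω^j). -/

import Mathlib

open Finset PowerSeries

private lemma keyA {K : Type*} [Field K] (ω : K) (s : ℕ) :
    ∀ n : ℕ, (1 - ω ^ (s + 1)) * ∏ j ∈ Finset.Icc 1 n, (1 - ω ^ (s + 1 + j)) =
      (1 - ω ^ (s + 1 + n)) * ∏ j ∈ Finset.Icc 1 n, (1 - ω ^ (s + j))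
  | 0 => by simp
  | (n + 1) => by
    rw [Finset.prod_Icc_succ_top (by omega), Finset.prod_Icc_succ_top (by omega)]
    have ih := keyA ω s n
    linear_combination (1 - ω ^ (s + 1 + (n + 1))) * ih

private lemma coeffId {K : Type*} [Field K] (ω : K) (s : ℕ)
    (hω : ∀ j : ℕ, 1 ≤ j → ω ^ j ≠ 1) (n : ℕ) :
    (∏ j ∈ Finset.Icc 1 (n + 1), (1 - ω ^ (s + 1 + j)) / (1 - ω ^ j)) -
      ω ^ (s + 1) * ∏ j ∈ Finset.Icc 1 n, (1 - ω ^ (s + 1 + j)) / (1 - ω ^ j) =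
      ∏ j ∈ Finset.Icc 1 (n + 1), (1 - ω ^ (s + j)) / (1 - ω ^ j) := by
  have hne : ∀ j : ℕ, 1 ≤ j → (1 - ω ^ j) ≠ 0 := fun j hj =>
    sub_ne_zero.mpr fun h => hω j hj h.symm
  simp only [Finset.prod_div_distrib]
  rw [Finset.prod_Icc_succ_top (by omega : 1 ≤ n + 1),
    Finset.prod_Icc_succ_top (by omega : 1 ≤ n + 1),
    Finset.prod_Icc_succ_top (by omega : 1 ≤ n + 1)]
  have hB : (∏ j ∈ Finset.Icc 1 n, (1 - ω ^ j)) ≠ 0 :=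
    Finset.prod_ne_zero_iff.mpr fun j hj => hne j (Finset.mem_Icc.mp hj).1
  have hn1 : (1 - ω ^ (n + 1)) ≠ 0 := hne _ (by omega)
  field_simp
  linear_combination keyA ω s n

theorem rothe_identity {K : Type*} [Field K] (ω : K) (s : ℕ)
    (hω : ∀ j : ℕ, 1 ≤ j → ω ^ j ≠ 1) :
    (∏ l ∈ Finset.range (s + 1), (1 - PowerSeries.C (ω ^ l) * PowerSeries.X))⁻¹ =
      PowerSeries.mk fun k => ∏ j ∈ Finset.Icc 1 k, (1 - ω ^ (s + j)) / (1 - ω ^ j) := by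
  have hne : ∀ j : ℕ, 1 ≤ j → (1 - ω ^ j) ≠ 0 := fun j hj =>
    sub_ne_zero.mpr fun h => hω j hj h.symm
  set f : ℕ → K⟦X⟧ := fun t => PowerSeries.mk fun k => ∏ j ∈ Finset.Icc 1 k, (1 - ω ^ (t + j)) / (1 - ω ^ j) with hf
  have hstep : ∀ t : ℕ, (1 - PowerSeries.C (ω ^ (t + 1)) * PowerSeries.X) * f (t + 1) = f t := by
    intro t
    ext k
    cases k with
    | zero => simp [hf]
    | succ n =>
      rw [sub_mul, one_mul, map_sub, mul_assoc, coeff_C_mul, coeff_succ_X_mul]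
      simp only [hf, coeff_mk]
      exact coeffId ω t hω n
  have main : ∀ t : ℕ, (∏ l ∈ Finset.range (t + 1), (1 - PowerSeries.C (ω ^ l) * PowerSeries.X)) * f t = 1 := by
    intro t
    induction t with
    | zero =>
      have hf0 : f 0 = PowerSeries.mk fun _ => (1 : K) := by
        ext k
        simp only [hf, coeff_mk, zero_add]
        exact Finset.prod_eq_one fun j hj => div_self (hne j (Finset.mem_Icc.mp hj).1)
      rw [hf0, Finset.prod_range_one, pow_zero]
      ext k
      cases k with
      | zero => simp
      | succ n =>
        rw [sub_mul, one_mul, map_sub, mul_assoc, coeff_C_mul, coeff_succ_X_mul]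
        simp
    | succ t ih =>
      rw [Finset.prod_range_succ, mul_assoc, hstep t, ih]
  rw [PowerSeries.inv_eq_iff_mul_eq_one]
  · rw [mul_comm]; exact main s
  · have : (PowerSeries.constantCoeff)
        (∏ l ∈ Finset.range (s + 1), (1 - PowerSeries.C (ω ^ l) * PowerSeries.X)) = 1 := by
      rw [map_prod]
      exact Finset.prod_eq_one fun l _ => by simp
    rw [this]; exact one_ne_zero
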